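/- Let A = ℂ[[x,y]]/(xy) with maximal ideal 𝔪 = (x,y). Then Hom_A(𝔪, 𝔪) is isomorphic as an A-module to the normalization ℂ[[x]] × ℂ[[y]] of A, and in particular requires 2 generators. -/

import Mathlib

set_option maxHeartbeats 1000000
set_option synthInstance.maxHeartbeats 400000

open MvPowerSeries

/-- The complete local ring `A = ℂ[[x,y]]/(xy)` of an ordinary node. -/
noncomputable abbrev NodalLocalRing : Type :=
  MvPowerSeries (Fin 2) ℂ ⧸
    Ideal.span {(MvPowerSeries.X 0 * MvPowerSeries.X 1 : MvPowerSeries (Fin 2) ℂ)}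

/-- The maximal ideal `𝔪 = (x, y)` of the nodal local ring. -/
noncomputable abbrev nodalMaxIdeal : Ideal NodalLocalRing :=
  Ideal.span
    {Ideal.Quotient.mk _ (MvPowerSeries.X 0), Ideal.Quotient.mk _ (MvPowerSeries.X 1)}

/-- The normalization `ℂ[[x]] × ℂ[[y]]` of the nodal local ring. -/
abbrev NodalNormalization : Type := PowerSeries ℂ × PowerSeries ℂ

namespace Stmt7Aux

open Finsupp

local notation "R2" => MvPowerSeries (Fin 2) ℂ
local notation "Ixy" =>
  (Ideal.span {(MvPowerSeries.X 0 * MvPowerSeries.X 1 : MvPowerSeries (Fin 2) ℂ)})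
local notation "mkA" => Ideal.Quotient.mk Ixy

lemma fin2_cases : ∀ i j k : Fin 2, i ≠ j → k = i ∨ k = j := by decide

lemma eq_single {i j : Fin 2} (hij : i ≠ j) {d : Fin 2 →₀ ℕ} (h : d j = 0) :
    d = Finsupp.single i (d i) := by
  ext k
  rcases fin2_cases i j k hij with rfl | rfl
  · simp
  · simp [Finsupp.single_eq_of_ne' hij, h]

lemma single_decomp {σ : Type*} {i : σ} {n : ℕ} {a b : σ →₀ ℕ}
    (hab : a + b = Finsupp.single i n) :
    a = Finsupp.single i (a i) ∧ b = Finsupp.single i (b i) := by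
  classical
  have key : ∀ k, k ≠ i → a k = 0 ∧ b k = 0 := by
    intro k hk
    have h1 := congrArg (fun f => f k) hab
    simp only [Finsupp.add_apply] at h1
    rw [Finsupp.single_apply, if_neg (fun h => hk h.symm)] at h1
    omega
  constructor <;> ext k <;> by_cases hk : k = i
  · subst hk; simp
  · rw [(key k hk).1, Finsupp.single_apply, if_neg (fun h => hk h.symm)]
  · subst hk; simp
  · rw [(key k hk).2, Finsupp.single_apply, if_neg (fun h => hk h.symm)]

/-- The coefficientwise "evaluation with the other variable set to 0" map. -/
noncomputable def E (i : Fin 2) : R2 →+* PowerSeries ℂ where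
  toFun F := PowerSeries.mk fun n => MvPowerSeries.coeff (Finsupp.single i n) F
  map_zero' := by ext n; simp
  map_one' := by
    ext n
    simp [MvPowerSeries.coeff_one, PowerSeries.coeff_one, Finsupp.single_eq_zero]
  map_add' F G := by ext n; simp
  map_mul' F G := by
    ext n
    rw [PowerSeries.coeff_mk, MvPowerSeries.coeff_mul, PowerSeries.coeff_mul]
    refine Finset.sum_nbij' (fun p => (p.1 i, p.2 i))
      (fun q => (Finsupp.single i q.1, Finsupp.single i q.2)) ?_ ?_ ?_ ?_ ?_
    · rintro ⟨a, b⟩ hab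
      rw [Finset.HasAntidiagonal.mem_antidiagonal] at hab
      rw [Finset.HasAntidiagonal.mem_antidiagonal]
      have := congrArg (fun f => f i) hab
      simpa using this
    · rintro ⟨m, n'⟩ hmn
      rw [Finset.HasAntidiagonal.mem_antidiagonal] at hmn
      rw [Finset.HasAntidiagonal.mem_antidiagonal, ← Finsupp.single_add, hmn]
    · rintro ⟨a, b⟩ hab
      rw [Finset.HasAntidiagonal.mem_antidiagonal] at hab
      obtain ⟨ea, eb⟩ := single_decomp hab
      simp only [Prod.mk.injEq]
      exact ⟨ea.symm, eb.symm⟩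
    · rintro ⟨m, n'⟩ _
      simp
    · rintro ⟨a, b⟩ hab
      rw [Finset.HasAntidiagonal.mem_antidiagonal] at hab
      obtain ⟨ea, eb⟩ := single_decomp hab
      simp only [PowerSeries.coeff_mk]
      rw [← ea, ← eb]

lemma coeff_E (i : Fin 2) (F : R2) (n : ℕ) :
    PowerSeries.coeff n (E i F) = MvPowerSeries.coeff (Finsupp.single i n) F := by
  exact PowerSeries.coeff_mk n (fun n => MvPowerSeries.coeff (Finsupp.single i n) F)
/-- The "pure power series in variable `i`" embedding. -/
noncomputable def U (i j : Fin 2) (hij : i ≠ j) : PowerSeries ℂ →+* R2 where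
  toFun p := fun d => if d j = 0 then PowerSeries.coeff (d i) p else 0
  map_zero' := by
    ext d
    show (if d j = 0 then _ else _) = _
    simp
  map_one' := by
    ext d
    show (if d j = 0 then PowerSeries.coeff (d i) 1 else 0) = _
    rw [MvPowerSeries.coeff_one, PowerSeries.coeff_one]
    by_cases hdj : d j = 0
    · by_cases hdi : d i = 0
      · rw [if_pos hdj, if_pos hdi, if_pos]
        rw [eq_single hij hdj, hdi, Finsupp.single_zero]
      · rw [if_pos hdj, if_neg hdi, if_neg]
        intro h
        rw [h] at hdi
        simp at hdi
    · rw [if_neg hdj, if_neg]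
      intro h
      rw [h] at hdj
      simp at hdj
  map_add' p q := by
    ext d
    show (if d j = 0 then PowerSeries.coeff (d i) (p + q) else 0)
      = (if d j = 0 then _ else _) + (if d j = 0 then _ else _)
    by_cases hdj : d j = 0 <;> simp [hdj]
  map_mul' p q := by
    ext d
    refine Eq.trans ?_ (MvPowerSeries.coeff_mul d _ _).symm
    show (if d j = 0 then PowerSeries.coeff (d i) (p * q) else 0) = _
    by_cases hdj : d j = 0
    · rw [if_pos hdj, PowerSeries.coeff_mul]
      symm
      refine Finset.sum_nbij' (fun p => (p.1 i, p.2 i))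
        (fun q => (Finsupp.single i q.1, Finsupp.single i q.2)) ?_ ?_ ?_ ?_ ?_
      · rintro ⟨a, b⟩ hab
        rw [Finset.HasAntidiagonal.mem_antidiagonal] at hab
        rw [Finset.HasAntidiagonal.mem_antidiagonal]
        have := congrArg (fun f => f i) hab
        simpa using this
      · rintro ⟨m, n'⟩ hmn
        rw [Finset.HasAntidiagonal.mem_antidiagonal] at hmn
        rw [Finset.HasAntidiagonal.mem_antidiagonal, ← Finsupp.single_add, hmn]
        exact (eq_single hij hdj).symm
      · rintro ⟨a, b⟩ hab
        rw [Finset.HasAntidiagonal.mem_antidiagonal, eq_single hij hdj] at hab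
        obtain ⟨ea, eb⟩ := single_decomp hab
        simp only [Prod.mk.injEq]
        exact ⟨ea.symm, eb.symm⟩
      · rintro ⟨m, n'⟩ _
        simp
      · rintro ⟨a, b⟩ hab
        rw [Finset.HasAntidiagonal.mem_antidiagonal] at hab
        have haj : a j = 0 ∧ b j = 0 := by
          have := congrArg (fun f => f j) hab
          simp only [Finsupp.add_apply] at this
          rw [hdj] at this
          omega
        show (if a j = 0 then PowerSeries.coeff (a i) p else 0) *
            (if b j = 0 then PowerSeries.coeff (b i) q else 0) = _
        rw [if_pos haj.1, if_pos haj.2]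
    · rw [if_neg hdj]
      refine (Finset.sum_eq_zero ?_).symm
      rintro ⟨a, b⟩ hab
      rw [Finset.HasAntidiagonal.mem_antidiagonal] at hab
      have hsum : a j + b j = d j := by
        have := congrArg (fun f => f j) hab
        simpa using this
      show (if a j = 0 then _ else (0:ℂ)) * (if b j = 0 then _ else (0:ℂ)) = 0
      by_cases haj : a j = 0
      · have hbj : b j ≠ 0 := by omega
        rw [if_neg hbj, mul_zero]
      · rw [if_neg haj, zero_mul]

lemma coeff_U (i j : Fin 2) (hij : i ≠ j) (p : PowerSeries ℂ) (d : Fin 2 →₀ ℕ) :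
    MvPowerSeries.coeff d (U i j hij p) =
      if d j = 0 then PowerSeries.coeff (d i) p else 0 :=
  rfl

lemma E_U (i j : Fin 2) (hij : i ≠ j) (p : PowerSeries ℂ) : E i (U i j hij p) = p := by
  ext n
  rw [coeff_E, coeff_U]
  rw [if_pos (Finsupp.single_eq_of_ne' hij)]
  rw [Finsupp.single_eq_same]

lemma U_X (i j : Fin 2) (hij : i ≠ j) :
    U i j hij PowerSeries.X = MvPowerSeries.X i := by
  ext d
  rw [coeff_U, MvPowerSeries.coeff_X, PowerSeries.coeff_X]
  by_cases hdj : d j = 0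
  · rw [if_pos hdj]
    by_cases hdi : d i = 1
    · rw [if_pos hdi, if_pos]
      rw [eq_single hij hdj, hdi]
    · rw [if_neg hdi, if_neg]
      intro h
      rw [h] at hdi
      simp at hdi
  · rw [if_neg hdj, if_neg]
    intro h
    rw [h, Finsupp.single_eq_of_ne' hij] at hdj
    exact hdj rfl

lemma pair_eq : ∀ i j : Fin 2, i ≠ j → (i = 0 ∧ j = 1) ∨ (i = 1 ∧ j = 0) := by decide

lemma coeff_fun (F : R2) (d : Fin 2 →₀ ℕ) : MvPowerSeries.coeff d F = F d := rfl

lemma X_mul_X : (MvPowerSeries.X 0 * MvPowerSeries.X 1 : R2)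
    = MvPowerSeries.monomial (Finsupp.single 0 1 + Finsupp.single 1 1) 1 := by
  rw [MvPowerSeries.X_def, MvPowerSeries.X_def, MvPowerSeries.monomial_mul_monomial, one_mul]

lemma mem_Ixy_iff (F : R2) :
    F ∈ Ixy ↔ ∀ d : Fin 2 →₀ ℕ, (d 0 = 0 ∨ d 1 = 0) → MvPowerSeries.coeff d F = 0 := by
  constructor
  · intro h d hd
    rw [Ideal.mem_span_singleton] at h
    obtain ⟨G, rfl⟩ := h
    rw [X_mul_X, MvPowerSeries.coeff_monomial_mul, if_neg]
    intro hle
    rw [Finsupp.le_def] at hle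
    have h0 := hle 0
    have h1 := hle 1
    simp [Finsupp.single_apply] at h0 h1
    omega
  · intro h
    rw [Ideal.mem_span_singleton]
    refine ⟨(fun d => MvPowerSeries.coeff (d + (Finsupp.single 0 1 + Finsupp.single 1 1)) F :
      (Fin 2 →₀ ℕ) → ℂ), ?_⟩
    apply MvPowerSeries.ext
    intro d
    rw [X_mul_X]
    refine Eq.trans ?_ (MvPowerSeries.coeff_monomial_mul _ _ _ _).symm
    by_cases hle : Finsupp.single 0 1 + Finsupp.single 1 1 ≤ d
    · rw [if_pos hle, one_mul, coeff_fun]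
      exact congrArg F (tsub_add_cancel_of_le hle).symm
    · rw [if_neg hle, coeff_fun]
      rw [Finsupp.le_def] at hle
      push_neg at hle
      obtain ⟨k, hk⟩ := hle
      rw [← coeff_fun F d]
      refine h d ?_
      rcases fin2_cases 0 1 k (by decide) with rfl | rfl
      · left
        simp [Finsupp.single_apply] at hk
        omega
      · right
        simp [Finsupp.single_apply] at hk
        omega

lemma purex (i j : Fin 2) (hij : i ≠ j) (F : R2) :
    MvPowerSeries.X i * (F - U i j hij (E i F)) ∈ Ixy := by
  rw [mem_Ixy_iff]
  intro d hd
  rw [MvPowerSeries.X_def, MvPowerSeries.coeff_monomial_mul]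
  by_cases hle : Finsupp.single i 1 ≤ d
  · rw [if_pos hle, one_mul]
    set d' := d - Finsupp.single i 1 with hd'
    have hd'j : d' j = d j := by
      rw [hd', Finsupp.tsub_apply, Finsupp.single_eq_of_ne' hij]
      omega
    rw [map_sub, coeff_U, coeff_E]
    by_cases hj : d' j = 0
    · rw [if_pos hj]
      have heq : MvPowerSeries.coeff d' F
          = MvPowerSeries.coeff (Finsupp.single i (d' i)) F := by
        rw [← eq_single hij hj]
      rw [← heq, sub_self]
    · exfalso
      have h1 : (Finsupp.single i 1) i ≤ d i := Finsupp.le_def.mp hle i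
      rw [Finsupp.single_eq_same] at h1
      have hdj : d j ≠ 0 := by rw [← hd'j]; exact hj
      rcases pair_eq i j hij with ⟨rfl, rfl⟩ | ⟨rfl, rfl⟩
      · rcases hd with hc | hc
        · omega
        · exact hdj hc
      · rcases hd with hc | hc
        · exact hdj hc
        · omega
  · rw [if_neg hle]

lemma annX (i j : Fin 2) (hij : i ≠ j) (F : R2)
    (h : MvPowerSeries.X j * F ∈ Ixy) : F - U i j hij (E i F) ∈ Ixy := by
  rw [mem_Ixy_iff] at h ⊢
  have hF : ∀ d : Fin 2 →₀ ℕ, d i = 0 → MvPowerSeries.coeff d F = 0 := by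
    intro d hdi
    have hside : ((d + Finsupp.single j 1 : Fin 2 →₀ ℕ)) 0 = 0 ∨ ((d + Finsupp.single j 1 : Fin 2 →₀ ℕ)) 1 = 0 := by
      have hcomp : ((d + Finsupp.single j 1 : Fin 2 →₀ ℕ)) i = 0 := by
        rw [Finsupp.add_apply, Finsupp.single_eq_of_ne' (fun hh => hij hh.symm), hdi]
        omega
      rcases pair_eq i j hij with ⟨rfl, rfl⟩ | ⟨rfl, rfl⟩
      · left; exact hcomp
      · right; exact hcomp
    have hkey := h (d + Finsupp.single j 1) hside
    rw [MvPowerSeries.X_def, MvPowerSeries.coeff_monomial_mul, if_pos le_add_self,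
      one_mul, add_tsub_cancel_right] at hkey
    exact hkey
  intro d hd
  rw [map_sub, coeff_U, coeff_E]
  by_cases hj : d j = 0
  · rw [if_pos hj]
    have heq : MvPowerSeries.coeff d F
        = MvPowerSeries.coeff (Finsupp.single i (d i)) F := by
      rw [← eq_single hij hj]
    rw [← heq, sub_self]
  · rw [if_neg hj, sub_zero]
    apply hF
    rcases pair_eq i j hij with ⟨rfl, rfl⟩ | ⟨rfl, rfl⟩ <;> tauto

noncomputable def nu' (i : Fin 2) : NodalLocalRing →+* PowerSeries ℂ :=
  Ideal.Quotient.lift Ixy (E i) (by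
    intro a ha
    rw [mem_Ixy_iff] at ha
    ext n
    rw [coeff_E, map_zero]
    apply ha
    rcases fin2_cases 0 1 i (by decide) with rfl | rfl
    · right; simp [Finsupp.single_apply]
    · left; simp [Finsupp.single_apply])

lemma nu'_mk (i : Fin 2) (F : R2) : nu' i (mkA F) = E i F :=
  Ideal.Quotient.lift_mk _ _ _

noncomputable def nu : NodalLocalRing →+* NodalNormalization :=
  (nu' 0).prod (nu' 1)

lemma E_X_self (i : Fin 2) : E i (MvPowerSeries.X i) = PowerSeries.X := by
  ext n
  rw [coeff_E, MvPowerSeries.coeff_X, PowerSeries.coeff_X]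
  by_cases h : n = 1
  · subst h; simp
  · rw [if_neg h, if_neg]
    intro hh
    apply h
    have := congrArg (fun f => f i) hh
    simpa using this

lemma E_X_ne (i j : Fin 2) (hij : i ≠ j) : E i (MvPowerSeries.X j) = 0 := by
  ext n
  rw [coeff_E, MvPowerSeries.coeff_X, map_zero, if_neg]
  intro hh
  have := congrArg (fun f => f j) hh
  simp only [Finsupp.single_eq_same, Finsupp.single_apply, if_neg hij] at this
  exact one_ne_zero this.symm

lemma nu_x : nu (mkA (MvPowerSeries.X 0)) = (PowerSeries.X, 0) := by
  have h0 : nu' 0 (mkA (MvPowerSeries.X 0)) = PowerSeries.X := by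
    rw [nu'_mk, E_X_self]
  have h1 : nu' 1 (mkA (MvPowerSeries.X 0)) = 0 := by
    rw [nu'_mk, E_X_ne 1 0 (by decide)]
  exact Prod.ext h0 h1

lemma nu_y : nu (mkA (MvPowerSeries.X 1)) = (0, PowerSeries.X) := by
  have h0 : nu' 0 (mkA (MvPowerSeries.X 1)) = 0 := by
    rw [nu'_mk, E_X_ne 0 1 (by decide)]
  have h1 : nu' 1 (mkA (MvPowerSeries.X 1)) = PowerSeries.X := by
    rw [nu'_mk, E_X_self]
  exact Prod.ext h0 h1

lemma const_nu' (i : Fin 2) {m : NodalLocalRing} (hm : m ∈ nodalMaxIdeal) :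
    PowerSeries.constantCoeff (nu' i m) = 0 := by
  have hle : nodalMaxIdeal ≤ RingHom.ker ((PowerSeries.constantCoeff).comp (nu' i)) := by
    rw [Ideal.span_le]
    rintro z (rfl | rfl)
    all_goals rw [SetLike.mem_coe, RingHom.mem_ker, RingHom.comp_apply, nu'_mk]
    · rcases fin2_cases 0 1 i (by decide) with rfl | rfl
      · rw [E_X_self]; exact PowerSeries.constantCoeff_X
      · rw [E_X_ne 1 0 (by decide), map_zero]
    · rcases fin2_cases 0 1 i (by decide) with rfl | rfl
      · rw [E_X_ne 0 1 (by decide), map_zero]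
      · rw [E_X_self]; exact PowerSeries.constantCoeff_X
  exact RingHom.mem_ker.mp (hle hm)

lemma const_eq (a : NodalLocalRing) :
    PowerSeries.constantCoeff (nu' 0 a) = PowerSeries.constantCoeff (nu' 1 a) := by
  obtain ⟨F, rfl⟩ := Ideal.Quotient.mk_surjective a
  rw [nu'_mk, nu'_mk, ← PowerSeries.coeff_zero_eq_constantCoeff, coeff_E, coeff_E]
  simp

lemma core (i j : Fin 2) (hij : i ≠ j) (F : R2) (h : PowerSeries ℂ)
    (hc : PowerSeries.constantCoeff h = 0) :
    mkA (U i j hij (E i F * h)) = mkA F * mkA (U i j hij h) := by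
  obtain ⟨h', rfl⟩ := PowerSeries.X_dvd_iff.mpr hc
  have hU : U i j hij (PowerSeries.X * h') = MvPowerSeries.X i * U i j hij h' := by
    rw [map_mul, U_X]
  rw [map_mul (U i j hij), hU, ← map_mul, Ideal.Quotient.eq]
  have hmem := Ideal.mul_mem_right (U i j hij h') _ (purex i j hij F)
  have h2 : U i j hij (E i F) * (MvPowerSeries.X i * U i j hij h')
      - F * (MvPowerSeries.X i * U i j hij h')
      = -(MvPowerSeries.X i * (F - U i j hij (E i F)) * U i j hij h') := by ring
  rw [h2]
  exact neg_mem hmem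

lemma memX0 : mkA (MvPowerSeries.X 0) ∈ nodalMaxIdeal :=
  Ideal.subset_span (Set.mem_insert _ _)

lemma memX1 : mkA (MvPowerSeries.X 1) ∈ nodalMaxIdeal :=
  Ideal.subset_span (by simp)

lemma memM (i j : Fin 2) (hij : i ≠ j) (hXi : mkA (MvPowerSeries.X i) ∈ nodalMaxIdeal)
    (h : PowerSeries ℂ) (hc : PowerSeries.constantCoeff h = 0) :
    mkA (U i j hij h) ∈ nodalMaxIdeal := by
  obtain ⟨h', rfl⟩ := PowerSeries.X_dvd_iff.mpr hc
  have hU : U i j hij (PowerSeries.X * h') = MvPowerSeries.X i * U i j hij h' := by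
    rw [map_mul, U_X]
  rw [hU, map_mul]
  exact Ideal.mul_mem_right _ _ hXi

lemma h01 : (0 : Fin 2) ≠ 1 := by decide
lemma h10 : (1 : Fin 2) ≠ 0 := by decide

noncomputable def modB : Module NodalLocalRing NodalNormalization := Module.compHom _ nu

attribute [local instance] modB

lemma smul_def (a : NodalLocalRing) (b : NodalNormalization) :
    a • b = (nu' 0 a * b.1, nu' 1 a * b.2) := rfl

lemma psi_piece (i j : Fin 2) (hij : i ≠ j) (a : NodalLocalRing) (c : PowerSeries ℂ)
    (m : NodalLocalRing) (hm : m ∈ nodalMaxIdeal) :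
    mkA (U i j hij (c * nu' i (a * m))) = a * mkA (U i j hij (c * nu' i m)) := by
  obtain ⟨F, rfl⟩ := Ideal.Quotient.mk_surjective a
  rw [map_mul (nu' i), nu'_mk]
  have hcomm : c * (E i F * nu' i m) = E i F * (c * nu' i m) := by ring
  rw [hcomm, core i j hij F _ (by rw [map_mul, const_nu' i hm, mul_zero])]

lemma const_mul_nu' (i : Fin 2) (c : PowerSeries ℂ) {m : NodalLocalRing}
    (hm : m ∈ nodalMaxIdeal) :
    PowerSeries.constantCoeff (c * nu' i m) = 0 := by
  rw [map_mul, const_nu' i hm, mul_zero]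

noncomputable def psiHom (b : NodalNormalization) :
    nodalMaxIdeal →ₗ[NodalLocalRing] nodalMaxIdeal where
  toFun m := ⟨mkA (U 0 1 h01 (b.1 * nu' 0 m.1)) + mkA (U 1 0 h10 (b.2 * nu' 1 m.1)),
    Submodule.add_mem _ (memM 0 1 h01 memX0 _ (const_mul_nu' 0 b.1 m.2))
      (memM 1 0 h10 memX1 _ (const_mul_nu' 1 b.2 m.2))⟩
  map_add' m m' := by
    apply Subtype.ext
    show mkA (U 0 1 h01 (b.1 * nu' 0 (m.1 + m'.1))) + mkA (U 1 0 h10 (b.2 * nu' 1 (m.1 + m'.1)))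
      = (mkA (U 0 1 h01 (b.1 * nu' 0 m.1)) + mkA (U 1 0 h10 (b.2 * nu' 1 m.1)))
        + (mkA (U 0 1 h01 (b.1 * nu' 0 m'.1)) + mkA (U 1 0 h10 (b.2 * nu' 1 m'.1)))
    rw [map_add (nu' 0), map_add (nu' 1), mul_add, mul_add, map_add (U 0 1 h01),
      map_add (U 1 0 h10), RingHom.map_add mkA, RingHom.map_add mkA]
    ring
  map_smul' a m := by
    apply Subtype.ext
    show mkA (U 0 1 h01 (b.1 * nu' 0 (a * m.1))) + mkA (U 1 0 h10 (b.2 * nu' 1 (a * m.1)))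
      = a * (mkA (U 0 1 h01 (b.1 * nu' 0 m.1)) + mkA (U 1 0 h10 (b.2 * nu' 1 m.1)))
    rw [psi_piece 0 1 h01 a b.1 m.1 m.2, psi_piece 1 0 h10 a b.2 m.1 m.2, mul_add]

lemma psiHom_apply_val (b : NodalNormalization) (m : nodalMaxIdeal) :
    ((psiHom b m : nodalMaxIdeal) : NodalLocalRing)
      = mkA (U 0 1 h01 (b.1 * nu' 0 m.1)) + mkA (U 1 0 h10 (b.2 * nu' 1 m.1)) := rfl

noncomputable def psi :
    NodalNormalization →ₗ[NodalLocalRing] (nodalMaxIdeal →ₗ[NodalLocalRing] nodalMaxIdeal) where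
  toFun := psiHom
  map_add' b b' := by
    refine LinearMap.ext fun m => Subtype.ext ?_
    rw [LinearMap.add_apply]
    show mkA (U 0 1 h01 ((b.1 + b'.1) * nu' 0 m.1)) + mkA (U 1 0 h10 ((b.2 + b'.2) * nu' 1 m.1))
      = (mkA (U 0 1 h01 (b.1 * nu' 0 m.1)) + mkA (U 1 0 h10 (b.2 * nu' 1 m.1)))
        + (mkA (U 0 1 h01 (b'.1 * nu' 0 m.1)) + mkA (U 1 0 h10 (b'.2 * nu' 1 m.1)))
    rw [add_mul, add_mul, map_add (U 0 1 h01), map_add (U 1 0 h10), RingHom.map_add mkA, RingHom.map_add mkA]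
    ring
  map_smul' a b := by
    refine LinearMap.ext fun m => Subtype.ext ?_
    rw [RingHom.id_apply, LinearMap.smul_apply]
    show mkA (U 0 1 h01 ((nu' 0 a * b.1) * nu' 0 m.1)) + mkA (U 1 0 h10 ((nu' 1 a * b.2) * nu' 1 m.1))
      = a * (mkA (U 0 1 h01 (b.1 * nu' 0 m.1)) + mkA (U 1 0 h10 (b.2 * nu' 1 m.1)))
    have e0 : nu' 0 a * b.1 * nu' 0 m.1 = b.1 * nu' 0 (a * m.1) := by
      rw [map_mul]; ring
    have e1 : nu' 1 a * b.2 * nu' 1 m.1 = b.2 * nu' 1 (a * m.1) := by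
      rw [map_mul]; ring
    rw [e0, e1, psi_piece 0 1 h01 a b.1 m.1 m.2, psi_piece 1 0 h10 a b.2 m.1 m.2, mul_add]

lemma nu'00 : nu' 0 (mkA (MvPowerSeries.X 0)) = PowerSeries.X := by rw [nu'_mk, E_X_self]
lemma nu'10 : nu' 1 (mkA (MvPowerSeries.X 0)) = 0 := by rw [nu'_mk, E_X_ne 1 0 (by decide)]
lemma nu'01 : nu' 0 (mkA (MvPowerSeries.X 1)) = 0 := by rw [nu'_mk, E_X_ne 0 1 (by decide)]
lemma nu'11 : nu' 1 (mkA (MvPowerSeries.X 1)) = PowerSeries.X := by rw [nu'_mk, E_X_self]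

lemma U_factor_zero (i j : Fin 2) (hij : i ≠ j) (c : PowerSeries ℂ)
    (h : mkA (U i j hij (c * PowerSeries.X)) = 0) : c = 0 := by
  rw [Ideal.Quotient.eq_zero_iff_mem, mem_Ixy_iff] at h
  ext n
  have hdis : (Finsupp.single i (n + 1) : Fin 2 →₀ ℕ) 0 = 0
      ∨ (Finsupp.single i (n + 1) : Fin 2 →₀ ℕ) 1 = 0 := by
    rcases pair_eq i j hij with ⟨rfl, rfl⟩ | ⟨rfl, rfl⟩
    · right; rw [Finsupp.single_eq_of_ne' hij]
    · left; rw [Finsupp.single_eq_of_ne' hij]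
  have hc := h (Finsupp.single i (n + 1)) hdis
  rw [coeff_U, if_pos (Finsupp.single_eq_of_ne' hij), Finsupp.single_eq_same,
    mul_comm, PowerSeries.coeff_succ_X_mul] at hc
  rw [hc, map_zero]

lemma psi_inj : Function.Injective psi := by
  have hker : ∀ b, psi b = 0 → b = 0 := by
    intro b hb
    have h0 := congrArg
      (fun g : nodalMaxIdeal →ₗ[NodalLocalRing] nodalMaxIdeal =>
        ((g ⟨mkA (MvPowerSeries.X 0), memX0⟩ : nodalMaxIdeal) : NodalLocalRing)) hb
    have h1 := congrArg
      (fun g : nodalMaxIdeal →ₗ[NodalLocalRing] nodalMaxIdeal =>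
        ((g ⟨mkA (MvPowerSeries.X 1), memX1⟩ : nodalMaxIdeal) : NodalLocalRing)) hb
    simp only [LinearMap.zero_apply, ZeroMemClass.coe_zero] at h0 h1
    rw [show (psi b) = psiHom b from rfl] at h0 h1
    rw [psiHom_apply_val] at h0 h1
    simp only [nu'00, nu'10, nu'01, nu'11, mul_zero, map_zero, add_zero, zero_add] at h0 h1
    refine Prod.ext ?_ ?_
    · exact U_factor_zero 0 1 h01 b.1 h0
    · exact U_factor_zero 1 0 h10 b.2 h1
  intro b b' h
  have : psi (b - b') = 0 := by rw [map_sub, h, sub_self]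
  have := hker _ this
  exact sub_eq_zero.mp this

lemma psi_surj : Function.Surjective psi := by
  intro f
  set mx : nodalMaxIdeal := ⟨mkA (MvPowerSeries.X 0), memX0⟩ with hmx
  set my : nodalMaxIdeal := ⟨mkA (MvPowerSeries.X 1), memX1⟩ with hmy
  -- x side
  have hxy0 : (mkA (MvPowerSeries.X 1)) • mx = (0 : nodalMaxIdeal) := by
    apply Subtype.ext
    show mkA (MvPowerSeries.X 1) * mkA (MvPowerSeries.X 0) = 0
    rw [← RingHom.map_mul mkA, Ideal.Quotient.eq_zero_iff_mem, mul_comm]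
    exact Ideal.subset_span rfl
  have h1 : (mkA (MvPowerSeries.X 1)) * ((f mx : nodalMaxIdeal) : NodalLocalRing) = 0 := by
    have hs := f.map_smul (mkA (MvPowerSeries.X 1)) mx
    rw [hxy0, map_zero] at hs
    have := congrArg (fun z : nodalMaxIdeal => (z : NodalLocalRing)) hs
    simpa using this.symm
  obtain ⟨F, hF⟩ := Ideal.Quotient.mk_surjective ((f mx : nodalMaxIdeal) : NodalLocalRing)
  have hXF : MvPowerSeries.X 1 * F ∈ Ixy := by
    rw [← Ideal.Quotient.eq_zero_iff_mem, RingHom.map_mul mkA, hF]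
    exact h1
  have hvalx : ((f mx : nodalMaxIdeal) : NodalLocalRing) = mkA (U 0 1 h01 (E 0 F)) := by
    rw [← hF]
    exact (Ideal.Quotient.eq).mpr (annX 0 1 h01 F hXF)
  have hEx : E 0 F = nu' 0 ((f mx : nodalMaxIdeal) : NodalLocalRing) := by rw [← hF, nu'_mk]
  have hconstx : PowerSeries.constantCoeff (E 0 F) = 0 := by
    rw [hEx]; exact const_nu' 0 (f mx).2
  obtain ⟨p, hp⟩ := PowerSeries.X_dvd_iff.mpr hconstx
  -- y side
  have hyx0 : (mkA (MvPowerSeries.X 0)) • my = (0 : nodalMaxIdeal) := by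
    apply Subtype.ext
    show mkA (MvPowerSeries.X 0) * mkA (MvPowerSeries.X 1) = 0
    rw [← RingHom.map_mul mkA, Ideal.Quotient.eq_zero_iff_mem]
    exact Ideal.subset_span rfl
  have h2 : (mkA (MvPowerSeries.X 0)) * ((f my : nodalMaxIdeal) : NodalLocalRing) = 0 := by
    have hs := f.map_smul (mkA (MvPowerSeries.X 0)) my
    rw [hyx0, map_zero] at hs
    have := congrArg (fun z : nodalMaxIdeal => (z : NodalLocalRing)) hs
    simpa using this.symm
  obtain ⟨G, hG⟩ := Ideal.Quotient.mk_surjective ((f my : nodalMaxIdeal) : NodalLocalRing)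
  have hXG : MvPowerSeries.X 0 * G ∈ Ixy := by
    rw [← Ideal.Quotient.eq_zero_iff_mem, RingHom.map_mul mkA, hG]
    exact h2
  have hvaly : ((f my : nodalMaxIdeal) : NodalLocalRing) = mkA (U 1 0 h10 (E 1 G)) := by
    rw [← hG]
    exact (Ideal.Quotient.eq).mpr (annX 1 0 h10 G hXG)
  have hEy : E 1 G = nu' 1 ((f my : nodalMaxIdeal) : NodalLocalRing) := by rw [← hG, nu'_mk]
  have hconsty : PowerSeries.constantCoeff (E 1 G) = 0 := by
    rw [hEy]; exact const_nu' 1 (f my).2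
  obtain ⟨q, hq⟩ := PowerSeries.X_dvd_iff.mpr hconsty
  refine ⟨(p, q), ?_⟩
  apply LinearMap.ext
  rintro ⟨z, hz⟩
  induction hz using Submodule.span_induction with
  | mem x h =>
    rcases h with rfl | h
    · apply Subtype.ext
      rw [show psi (p, q) = psiHom (p, q) from rfl, psiHom_apply_val]
      show mkA (U 0 1 h01 (p * nu' 0 (mkA (MvPowerSeries.X 0))))
        + mkA (U 1 0 h10 (q * nu' 1 (mkA (MvPowerSeries.X 0)))) = _
      rw [nu'00, nu'10, mul_zero, map_zero, map_zero, add_zero, mul_comm p]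
      rw [← hp, ← hvalx]
    · rw [Set.mem_singleton_iff] at h
      subst h
      apply Subtype.ext
      rw [show psi (p, q) = psiHom (p, q) from rfl, psiHom_apply_val]
      show mkA (U 0 1 h01 (p * nu' 0 (mkA (MvPowerSeries.X 1))))
        + mkA (U 1 0 h10 (q * nu' 1 (mkA (MvPowerSeries.X 1)))) = _
      rw [nu'01, nu'11, mul_zero, map_zero, map_zero, zero_add, mul_comm q]
      rw [← hq, ← hvaly]
  | zero =>
    have hzz : (⟨0, Submodule.zero_mem _⟩ : nodalMaxIdeal) = 0 := rfl
    rw [hzz, map_zero, map_zero]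
  | add x y hx hy ihx ihy =>
    have hzz : (⟨x + y, Submodule.add_mem _ hx hy⟩ : nodalMaxIdeal)
      = ⟨x, hx⟩ + ⟨y, hy⟩ := rfl
    rw [hzz, map_add, map_add, ihx, ihy]
  | smul a x hx ih =>
    have hzz : (⟨a • x, Submodule.smul_mem _ a hx⟩ : nodalMaxIdeal)
      = a • ⟨x, hx⟩ := rfl
    rw [hzz, map_smul, map_smul, ih]

noncomputable def psiEquiv :
    NodalNormalization ≃ₗ[NodalLocalRing] (nodalMaxIdeal →ₗ[NodalLocalRing] nodalMaxIdeal) :=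
  LinearEquiv.ofBijective psi ⟨psi_inj, psi_surj⟩

lemma two_gen :
    Submodule.span NodalLocalRing {psi (1, 0), psi (0, 1)} = ⊤ := by
  rw [eq_top_iff]
  rintro h -
  obtain ⟨⟨p, q⟩, rfl⟩ := psi_surj h
  rw [Submodule.mem_span_pair]
  refine ⟨mkA (U 0 1 h01 p), mkA (U 1 0 h10 q), ?_⟩
  rw [← map_smul psi, ← map_smul psi, ← map_add psi]
  congr 1
  rw [smul_def, smul_def]
  have e1 : nu' 0 (mkA (U 0 1 h01 p)) = p := by rw [nu'_mk, E_U]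
  have e2 : nu' 1 (mkA (U 1 0 h10 q)) = q := by rw [nu'_mk, E_U]
  refine Prod.ext ?_ ?_
  · show nu' 0 (mkA (U 0 1 h01 p)) * 1 + nu' 0 (mkA (U 1 0 h10 q)) * 0 = p
    rw [e1, mul_one, mul_zero, add_zero]
  · show nu' 1 (mkA (U 0 1 h01 p)) * 0 + nu' 1 (mkA (U 1 0 h10 q)) * 1 = q
    rw [e2, mul_one, mul_zero, zero_add]

lemma not_cyclic (f : nodalMaxIdeal →ₗ[NodalLocalRing] nodalMaxIdeal)
    (hf : Submodule.span NodalLocalRing {f} = ⊤) : False := by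
  obtain ⟨⟨p, q⟩, rfl⟩ := psi_surj f
  have h1 : psi (1, 0) ∈ Submodule.span NodalLocalRing {psi (p, q)} := by
    rw [hf]; exact Submodule.mem_top
  have h2 : psi (0, 1) ∈ Submodule.span NodalLocalRing {psi (p, q)} := by
    rw [hf]; exact Submodule.mem_top
  rw [Submodule.mem_span_singleton] at h1 h2
  obtain ⟨a, ha⟩ := h1
  obtain ⟨a', ha'⟩ := h2
  rw [← map_smul psi] at ha ha'
  have hb := psi_inj ha
  have hb' := psi_inj ha'
  rw [smul_def] at hb hb'
  have c1 : nu' 0 a * p = 1 := congrArg Prod.fst hb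
  have c2 : nu' 1 a * q = 0 := congrArg Prod.snd hb
  have c4 : nu' 1 a' * q = 1 := congrArg Prod.snd hb'
  have hq0 : q ≠ 0 := by
    intro h
    rw [h, mul_zero] at c4
    exact zero_ne_one c4
  have hnu1a : nu' 1 a = 0 := by
    rcases mul_eq_zero.mp c2 with h | h
    · exact h
    · exact absurd h hq0
  have hc0 : PowerSeries.constantCoeff (nu' 0 a) = 0 := by
    rw [const_eq, hnu1a, map_zero]
  have := congrArg (PowerSeries.constantCoeff) c1
  rw [map_mul, hc0, zero_mul, map_one] at this
  exact zero_ne_one this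

end Stmt7Aux

/-- `Hom_A(𝔪, 𝔪)` is isomorphic, as an `A`-module, to the normalization
`ℂ[[x]] × ℂ[[y]]` of `A = ℂ[[x,y]]/(xy)` (where `A` acts on the normalization via
the ring homomorphism sending `x` to `(x, 0)` and `y` to `(0, y)`); in particular
it is generated by `2` elements and is not cyclic. -/
theorem stmt_7 :
    (∃ ν : NodalLocalRing →+* NodalNormalization,
      ν (Ideal.Quotient.mk _ (MvPowerSeries.X 0)) = (PowerSeries.X, 0) ∧
      ν (Ideal.Quotient.mk _ (MvPowerSeries.X 1)) = (0, PowerSeries.X) ∧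
      (letI : Module NodalLocalRing NodalNormalization := Module.compHom _ ν
       Nonempty ((nodalMaxIdeal →ₗ[NodalLocalRing] nodalMaxIdeal)
          ≃ₗ[NodalLocalRing] NodalNormalization))) ∧
    (∃ f g : nodalMaxIdeal →ₗ[NodalLocalRing] nodalMaxIdeal,
      Submodule.span NodalLocalRing {f, g} = ⊤) ∧
    (∀ f : nodalMaxIdeal →ₗ[NodalLocalRing] nodalMaxIdeal,
      Submodule.span NodalLocalRing {f} ≠ ⊤) := by
  refine ⟨⟨Stmt7Aux.nu, Stmt7Aux.nu_x, Stmt7Aux.nu_y, ⟨Stmt7Aux.psiEquiv.symm⟩⟩,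
    ⟨Stmt7Aux.psi (1, 0), Stmt7Aux.psi (0, 1), Stmt7Aux.two_gen⟩,
    fun f hf => Stmt7Aux.not_cyclic f hf⟩
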